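/- Let ψ(z) = 2·(log(z + 4)/log 2 − 2). There exists a function Ψ : ℝ → ℝ such that for every real z > −2 the sequence ψ^[k](z) · (log 4)^k converges to Ψ(z) as k → ∞, and Ψ satisfies Schröder's equation Ψ(ψ(z)) = Ψ(z) / log 4 for every z > −2. -/

import Mathlib

open Filter Real Topology

noncomputable def psiK : ℝ → ℝ := fun t : ℝ => 2 * (Real.log (t + 4) / Real.log 2 - 2)

lemma log2_pos : (0:ℝ) < Real.log 2 := Real.log_pos (by norm_num)

lemma log4_eq : Real.log 4 = 2 * Real.log 2 := by
  rw [show (4:ℝ) = 2^2 by norm_num, Real.log_pow]; push_cast; ring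

lemma log4_gt : (5:ℝ)/4 < Real.log 4 := by
  have := Real.log_two_gt_d9
  rw [log4_eq]; nlinarith

lemma log4_pos : (0:ℝ) < Real.log 4 := lt_trans (by norm_num) log4_gt

lemma psiK_mul_log2 {t : ℝ} : psiK t * Real.log 2 = 2 * Real.log (t+4) - 4 * Real.log 2 := by
  have := ne_of_gt log2_pos
  simp only [psiK]; field_simp; ring

lemma psiK_zero : psiK 0 = 0 := by
  have h := psiK_mul_log2 (t := 0)
  rw [zero_add, log4_eq] at h
  have h2 : psiK 0 * Real.log 2 = 0 := by linarith
  rcases mul_eq_zero.1 h2 with h3 | h3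
  · exact h3
  · exact absurd h3 (ne_of_gt log2_pos)

lemma psiK_mono {s t : ℝ} (hs : -2 ≤ s) (hst : s < t) : psiK s < psiK t := by
  have h1 : (0:ℝ) < s + 4 := by linarith
  have := Real.log_lt_log h1 (by linarith : s + 4 < t + 4)
  have l2 := log2_pos
  simp only [psiK]
  rw [mul_lt_mul_iff_right₀ (by norm_num : (0:ℝ) < 2), sub_lt_sub_iff_right,
    div_lt_div_iff_of_pos_right l2]
  exact this

lemma psiK_neg2 : psiK (-2) = -2 := by
  simp only [psiK]
  rw [show (-2:ℝ) + 4 = 2 by norm_num, div_self (ne_of_gt log2_pos)]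
  ring

lemma psiK_gt_neg2 {t : ℝ} (ht : -2 < t) : -2 < psiK t := by
  have := psiK_mono (s := -2) le_rfl ht
  rwa [psiK_neg2] at this

/-- upper bound: ψ t ≤ t / log 4 -/
lemma psiK_le {t : ℝ} (ht : -2 < t) : psiK t ≤ t / Real.log 4 := by
  have h1 : (0:ℝ) < (t + 4) / 4 := by linarith
  have h2 := Real.log_le_sub_one_of_pos h1
  rw [Real.log_div (by linarith) (by norm_num), log4_eq] at h2
  -- log (t+4) ≤ 2 log 2 + t/4
  have l2 := log2_pos
  rw [log4_eq, le_div_iff₀ (by positivity : (0:ℝ) < 2 * Real.log 2)]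
  have e : psiK t * (2 * Real.log 2) = 2 * (psiK t * Real.log 2) := by ring
  rw [e, psiK_mul_log2]
  linarith

/-- lower bound on (-2,0]: t * (1 - t/2) / log 4 ≤ ψ t -/
lemma psiK_ge {t : ℝ} (ht : -2 < t) (ht0 : t ≤ 0) :
    t * (1 - t/2) / Real.log 4 ≤ psiK t := by
  have h1 : (0:ℝ) < (t + 4) / 4 := by linarith
  have h4 : (0:ℝ) < t + 4 := by linarith
  have h2 := Real.one_sub_inv_le_log_of_pos h1
  rw [Real.log_div (by linarith) (by norm_num), log4_eq, inv_div] at h2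
  -- 1 - 4/(t+4) ≤ log(t+4) - 2 log 2
  have h6 : 1 - 4 / (t + 4) = t / (t + 4) := by field_simp; ring
  rw [h6] at h2
  have key : t / 4 - t^2 / 8 ≤ t / (t + 4) := by
    rw [div_sub_div _ _ (by norm_num : (4:ℝ) ≠ 0) (by norm_num : (8:ℝ) ≠ 0),
      div_le_div_iff₀ (by norm_num) h4]
    nlinarith [mul_nonneg (sq_nonneg t) (by linarith : (0:ℝ) ≤ t + 2)]
  have h5 : t / 4 - t^2 / 8 ≤ Real.log (t + 4) - 2 * Real.log 2 := le_trans key h2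
  have l2 := log2_pos
  rw [log4_eq, div_le_iff₀ (by positivity : (0:ℝ) < 2 * Real.log 2)]
  have e : psiK t * (2 * Real.log 2) = 2 * (psiK t * Real.log 2) := by ring
  rw [e, psiK_mul_log2]
  nlinarith

/-- ψ t > t on (-2,0) -/
lemma psiK_gt_self {t : ℝ} (ht : -2 < t) (ht0 : t < 0) : t < psiK t := by
  have hs : (0:ℝ) < -t/2 := by linarith
  have hs1 : (0:ℝ) < 1 + t/2 := by linarith
  have hsum : -t/2 + (1 + t/2) = 1 := by ring
  have key := strictConcaveOn_log_Ioi.2 (by norm_num : (2:ℝ) ∈ Set.Ioi (0:ℝ))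
    (by norm_num : (4:ℝ) ∈ Set.Ioi (0:ℝ)) (by norm_num) hs hs1 hsum
  simp only [smul_eq_mul] at key
  rw [show -t/2 * 2 + (1 + t/2) * 4 = t + 4 by ring, log4_eq] at key
  have l2 := log2_pos
  have : t * Real.log 2 < psiK t * Real.log 2 := by
    rw [psiK_mul_log2]; nlinarith
  exact lt_of_mul_lt_mul_right this (le_of_lt l2)

lemma psiK_mono_le {s t : ℝ} (hs : -2 ≤ s) (h : s ≤ t) : psiK s ≤ psiK t := by
  rcases eq_or_lt_of_le h with rfl | h
  · exact le_rfl
  · exact le_of_lt (psiK_mono hs h)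

set_option maxHeartbeats 1000000 in
lemma conv_neg (z : ℝ) (hz : -2 < z) (hz0 : z < 0) :
    ∃ l, Tendsto (fun k : ℕ => psiK^[k] z * (Real.log 4) ^ k) atTop (𝓝 l) := by
  set L := Real.log 4 with hL
  have hLpos : (0:ℝ) < L := log4_pos
  set a : ℕ → ℝ := fun k => psiK^[k] z with ha
  have ha_succ : ∀ k, a (k+1) = psiK (a k) := fun k => Function.iterate_succ_apply' psiK k z
  have ha0 : a 0 = z := rfl
  have hmem : ∀ k, -2 < a k ∧ a k < 0 := by
    intro k; induction k with
    | zero => exact ⟨hz, hz0⟩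
    | succ k ih =>
      rw [ha_succ]
      refine ⟨psiK_gt_neg2 ih.1, ?_⟩
      have := psiK_mono (le_of_lt ih.1) ih.2
      rwa [psiK_zero] at this
  have hlt : ∀ k, a k < a (k+1) := fun k => by
    rw [ha_succ]; exact psiK_gt_self (hmem k).1 (hmem k).2
  have hmono : Monotone a := monotone_nat_of_le_succ fun k => le_of_lt (hlt k)
  have hbdd : BddAbove (Set.range a) := ⟨0, by rintro _ ⟨k, rfl⟩; exact le_of_lt (hmem k).2⟩
  have hsup := tendsto_atTop_ciSup hmono hbdd
  set l := ⨆ k, a k with hldef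
  have hl_le : l ≤ 0 := ciSup_le fun k => (hmem k).2.le
  have hl_ge : z ≤ l := ha0 ▸ le_ciSup hbdd 0
  have hl_gt : -2 < l := lt_of_lt_of_le hz hl_ge
  have hcont : ContinuousAt psiK l := by
    have hne : l + 4 ≠ 0 := by linarith
    apply ContinuousAt.mul continuousAt_const
    apply ContinuousAt.sub _ continuousAt_const
    apply ContinuousAt.div_const
    exact ContinuousAt.comp (f := fun t : ℝ => t + 4) (Real.continuousAt_log hne)
      (continuousAt_id.add continuousAt_const)
  have hfix : psiK l = l := by
    have h1 : Tendsto (fun k => a (k+1)) atTop (𝓝 l) := hsup.comp (tendsto_add_atTop_nat 1)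
    have h2 : Tendsto (fun k => psiK (a k)) atTop (𝓝 (psiK l)) := hcont.tendsto.comp hsup
    have he : (fun k => a (k+1)) = fun k => psiK (a k) := funext ha_succ
    rw [he] at h1
    exact (tendsto_nhds_unique h1 h2).symm
  have hl0 : l = 0 := by
    by_contra h
    have hlneg : l < 0 := lt_of_le_of_ne hl_le h
    exact absurd hfix (ne_of_gt (psiK_gt_self hl_gt hlneg))
  rw [hl0] at hsup
  obtain ⟨N, hN⟩ := (hsup.eventually (eventually_gt_nhds (show (-(1/2) : ℝ) < 0 by norm_num))).exists
  set rho := 5 / (4 * L) with hrho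
  have hrho0 : 0 < rho := by positivity
  have hrho1 : rho < 1 := by
    rw [hrho, div_lt_one (by positivity)]
    have := log4_gt; rw [← hL] at this; nlinarith
  have hrhoL : rho * L = 5/4 := by rw [hrho]; field_simp
  -- geometric decay after N
  have hgeo : ∀ j, -(1/2) * rho^j ≤ a (N+j) := by
    intro j; induction j with
    | zero => simpa using le_of_lt hN
    | succ j ih =>
      have hm := hmem (N+j)
      have step := psiK_ge hm.1 hm.2.le
      have hrj1 : rho ^ j ≤ 1 := pow_le_one₀ hrho0.le hrho1.le
      have hrjpos : (0:ℝ) < rho ^ j := pow_pos hrho0 j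
      have hahalf : -(1/2) ≤ a (N+j) := by nlinarith
      rw [show N+(j+1) = (N+j)+1 by ring, ha_succ]
      refine le_trans ?_ step
      rw [le_div_iff₀ hLpos]
      have e : -(1/2) * rho^(j+1) * L = -(1/2) * rho^j * (5/4) := by
        rw [pow_succ]; nlinarith [hrhoL]
      rw [e]
      nlinarith [mul_nonneg (by linarith : (0:ℝ) ≤ a (N+j) + 1/2) (by linarith : (0:ℝ) ≤ -a (N+j)),
        mul_nonneg (by linarith : (0:ℝ) ≤ a (N+j) + 1/2 * rho^j) (by linarith : (0:ℝ) ≤ -a (N+j))]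
  -- the rescaled sequence
  set b : ℕ → ℝ := fun k => a k * L ^ k with hb
  have hbneg : ∀ k, b k ≤ 0 := fun k =>
    mul_nonpos_of_nonpos_of_nonneg (hmem k).2.le (pow_nonneg hLpos.le k)
  have hb_anti : Antitone b := by
    apply antitone_nat_of_succ_le
    intro k
    have h := psiK_le (hmem k).1
    have h2 := mul_le_mul_of_nonneg_right h (pow_nonneg hLpos.le (k+1))
    show a (k+1) * L ^ (k+1) ≤ a k * L ^ k
    rw [ha_succ]
    calc psiK (a k) * L ^ (k+1) ≤ (a k / L) * L ^ (k+1) := h2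
      _ = a k * L ^ k := by rw [pow_succ]; field_simp
  have hb_rec : ∀ k, b k * (1 - a k / 2) ≤ b (k+1) := by
    intro k
    have h := psiK_ge (hmem k).1 (hmem k).2.le
    have h2 := mul_le_mul_of_nonneg_right h (pow_nonneg hLpos.le (k+1))
    show b k * (1 - a k / 2) ≤ a (k+1) * L ^ (k+1)
    rw [ha_succ]
    calc b k * (1 - a k / 2) = a k * L ^ k * (1 - a k / 2) := rfl
      _ = a k * (1 - a k / 2) / L * L ^ (k+1) := by
          rw [pow_succ]; field_simp
      _ ≤ psiK (a k) * L ^ (k+1) := h2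
  -- phase 1 bound
  have claim1 : ∀ k, k ≤ N → -(2 * 2^k) ≤ b k := by
    intro k; induction k with
    | zero =>
      intro _
      show -(2 * 2^0 : ℝ) ≤ a 0 * L ^ 0
      rw [ha0, pow_zero, mul_one]
      norm_num
      linarith
    | succ k ih =>
      intro hk
      have ihk := ih (le_of_lt (Nat.lt_of_succ_le hk))
      have hrec := hb_rec k
      have hm := hmem k
      have hbk := hbneg k
      have h2k : (0:ℝ) < 2^k := by positivity
      refine le_trans ?_ hrec
      nlinarith [mul_nonneg (by linarith : (0:ℝ) ≤ 1 + a k / 2) (by linarith : (0:ℝ) ≤ -b k),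
        pow_succ (2:ℝ) k, (by positivity : (0:ℝ) < 2^k)]
  -- phase 2 bound
  have claim2 : ∀ j, -(2 * 2^N) * Real.exp ((1 - rho^j)/(1 - rho)) ≤ b (N + j) := by
    intro j; induction j with
    | zero =>
      have h3 : (1 - rho^(0:ℕ))/(1 - rho) = 0 := by norm_num
      rw [h3, Real.exp_zero, mul_one, Nat.add_zero]
      exact claim1 N le_rfl
    | succ j ih =>
      have hrec := hb_rec (N + j)
      have hm := hmem (N + j)
      have hg := hgeo j
      have hrjpos : (0:ℝ) < rho ^ j := pow_pos hrho0 j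
      have hf : 1 - a (N+j) / 2 ≤ Real.exp (rho^j) := by
        have := Real.add_one_le_exp (rho^j)
        nlinarith
      have hstep : b (N+j) * Real.exp (rho^j) ≤ b (N+j) * (1 - a (N+j)/2) :=
        mul_le_mul_of_nonpos_left hf (hbneg (N+j))
      have hmul := mul_le_mul_of_nonneg_right ih (Real.exp_pos (rho^j)).le
      have hsum : (1 - rho^j)/(1 - rho) + rho^j = (1 - rho^(j+1))/(1 - rho) := by
        have h1 : (1:ℝ) - rho ≠ 0 := by linarith
        field_simp
        ring
      calc -(2 * 2^N) * Real.exp ((1 - rho^(j+1))/(1 - rho))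
          = -(2 * 2^N) * Real.exp ((1 - rho^j)/(1 - rho)) * Real.exp (rho^j) := by
            rw [mul_assoc, ← Real.exp_add, hsum]
        _ ≤ b (N+j) * Real.exp (rho^j) := hmul
        _ ≤ b (N+j) * (1 - a (N+j)/2) := hstep
        _ ≤ b (N+(j+1)) := by rw [show N+(j+1) = (N+j)+1 by ring]; exact hrec
  -- uniform lower bound
  set C := (2 * 2^N : ℝ) * Real.exp (1/(1 - rho)) with hC
  have hbddb : BddBelow (Set.range b) := by
    refine ⟨-C, ?_⟩
    rintro _ ⟨k, rfl⟩
    rcases le_or_gt k N with hk | hk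
    · have h1 := claim1 k hk
      have h2 : (2:ℝ)^k ≤ 2^N := by
        apply pow_le_pow_right₀ (by norm_num) hk
      have h3 : (1:ℝ) ≤ Real.exp (1/(1 - rho)) := by
        rw [Real.one_le_exp_iff]
        have hd : (0:ℝ) < 1 - rho := by linarith
        exact div_nonneg zero_le_one hd.le
      rw [hC]
      nlinarith [(by positivity : (0:ℝ) < (2:ℝ)^N)]
    · obtain ⟨j, rfl⟩ := Nat.exists_eq_add_of_le (le_of_lt hk)
      have h1 := claim2 j
      have hrjpos : (0:ℝ) ≤ rho ^ j := (pow_pos hrho0 j).le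
      have hmonoexp : Real.exp ((1 - rho^j)/(1 - rho)) ≤ Real.exp (1/(1 - rho)) := by
        apply Real.exp_le_exp.mpr
        have hd : (0:ℝ) < 1 - rho := by linarith
        gcongr
        linarith
      have hpos : (0:ℝ) < 2 * 2^N := by positivity
      have h4 := mul_le_mul_of_nonneg_left hmonoexp hpos.le
      rw [hC]
      linarith
  exact ⟨_, tendsto_atTop_ciInf hb_anti hbddb⟩


lemma conv_nonneg (z : ℝ) (hz0 : 0 ≤ z) :
    ∃ l, Tendsto (fun k : ℕ => psiK^[k] z * (Real.log 4) ^ k) atTop (𝓝 l) := by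
  set L := Real.log 4 with hL
  have hLpos : (0:ℝ) < L := log4_pos
  set a : ℕ → ℝ := fun k => psiK^[k] z with ha
  have ha_succ : ∀ k, a (k+1) = psiK (a k) := fun k => Function.iterate_succ_apply' psiK k z
  have hmem : ∀ k, 0 ≤ a k := by
    intro k; induction k with
    | zero => exact hz0
    | succ k ih =>
      rw [ha_succ]
      have := psiK_mono_le (by norm_num : (-2:ℝ) ≤ 0) ih
      rwa [psiK_zero] at this
  set b : ℕ → ℝ := fun k => a k * L ^ k with hb
  have hb_anti : Antitone b := by
    apply antitone_nat_of_succ_le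
    intro k
    have h := psiK_le (lt_of_lt_of_le (by norm_num) (hmem k))
    have h2 := mul_le_mul_of_nonneg_right h (pow_nonneg hLpos.le (k+1))
    show a (k+1) * L ^ (k+1) ≤ a k * L ^ k
    rw [ha_succ]
    calc psiK (a k) * L ^ (k+1) ≤ (a k / L) * L ^ (k+1) := h2
      _ = a k * L ^ k := by rw [pow_succ]; field_simp
  have hbddb : BddBelow (Set.range b) := by
    refine ⟨0, ?_⟩
    rintro _ ⟨k, rfl⟩
    exact mul_nonneg (hmem k) (pow_nonneg hLpos.le k)
  exact ⟨_, tendsto_atTop_ciInf hb_anti hbddb⟩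

lemma convK (z : ℝ) (hz : -2 < z) :
    ∃ l, Tendsto (fun k : ℕ => psiK^[k] z * (Real.log 4) ^ k) atTop (𝓝 l) := by
  rcases lt_or_ge z 0 with h | h
  · exact conv_neg z hz h
  · exact conv_nonneg z h

noncomputable def PsiK : ℝ → ℝ :=
  fun z => limUnder atTop (fun k : ℕ => psiK^[k] z * (Real.log 4) ^ k)

lemma tendsto_PsiK (z : ℝ) (hz : -2 < z) :
    Tendsto (fun k : ℕ => psiK^[k] z * (Real.log 4) ^ k) atTop (𝓝 (PsiK z)) := by
  obtain ⟨l, h⟩ := convK z hz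
  rw [PsiK, h.limUnder_eq]
  exact h

/-- For `ψ(z) = 2·(log(z+4)/log 2 − 2)` there exists a Koenig linearizer `Ψ` on `(-2, ∞)`:
`ψ^[k](z) · (log 4)^k → Ψ(z)` and `Ψ(ψ(z)) = Ψ(z) / log 4` for all `z > −2`. -/
theorem schroeder_solution_for_conjugated_log :
    ∃ Ψ : ℝ → ℝ,
      (∀ z : ℝ, -2 < z →
        Filter.Tendsto
          (fun k : ℕ =>
            (fun t : ℝ => 2 * (Real.log (t + 4) / Real.log 2 - 2))^[k] z * (Real.log 4) ^ k)
          Filter.atTop (nhds (Ψ z))) ∧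
      (∀ z : ℝ, -2 < z →
        Ψ (2 * (Real.log (z + 4) / Real.log 2 - 2)) = Ψ z / Real.log 4) := by
  refine ⟨PsiK, fun z hz => tendsto_PsiK z hz, fun z hz => ?_⟩
  show PsiK (psiK z) = PsiK z / Real.log 4
  have hw : -2 < psiK z := psiK_gt_neg2 hz
  have h1 := tendsto_PsiK z hz
  have h2 := tendsto_PsiK (psiK z) hw
  have h4 : Tendsto (fun k : ℕ => psiK^[k+1] z * (Real.log 4) ^ (k+1)) atTop (𝓝 (PsiK z)) :=
    h1.comp (tendsto_add_atTop_nat 1)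
  have h3 : Tendsto (fun k : ℕ => psiK^[k+1] z * (Real.log 4) ^ k) atTop
      (𝓝 (PsiK z / Real.log 4)) := by
    have h5 : (fun k : ℕ => psiK^[k+1] z * (Real.log 4) ^ k) =
        fun k : ℕ => (psiK^[k+1] z * (Real.log 4) ^ (k+1)) / Real.log 4 := by
      funext k
      rw [pow_succ]
      field_simp [ne_of_gt log4_pos]
    rw [h5]
    exact h4.div_const _
  have h6 : (fun k : ℕ => psiK^[k] (psiK z) * (Real.log 4) ^ k) =
      fun k : ℕ => psiK^[k+1] z * (Real.log 4) ^ k := by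
    funext k
    rw [Function.iterate_succ_apply]
  rw [h6] at h2
  exact tendsto_nhds_unique h2 h3
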